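/- Let A be a real d×d matrix, semi-simple with purely imaginary eigenvalues, and let V : ℝ^d → ℝ be a continuous function such that t ↦ V(e^{tA}x) is nonincreasing for every x. Then V(e^{tA}x) = V(x) for all t ≥ 0 and all x. -/

import Mathlib

open Matrix Filter Topology

namespace Stmt12Aux

open NormedSpace

attribute [local instance] Matrix.linftyOpNormedAddCommGroup Matrix.linftyOpNormedRing
  Matrix.linftyOpNormedAlgebra

variable {d : ℕ}

lemma norm_map_ofReal (M : Matrix (Fin d) (Fin d) ℝ) :
    ‖M.map (algebraMap ℝ ℂ)‖ = ‖M‖ := by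
  have h : ∀ i j, ‖M.map (algebraMap ℝ ℂ) i j‖₊ = ‖M i j‖₊ := fun i j => by
    simp [Matrix.map_apply]
  rw [Matrix.linfty_opNorm_def, Matrix.linfty_opNorm_def]
  simp_rw [h]

lemma map_exp_ofReal (M : Matrix (Fin d) (Fin d) ℝ) :
    (exp M).map (algebraMap ℝ ℂ) = exp (M.map (algebraMap ℝ ℂ)) := by
  let φ : Matrix (Fin d) (Fin d) ℝ →ₐ[ℝ] Matrix (Fin d) (Fin d) ℂ :=
    AlgHom.mapMatrix (Algebra.ofId ℝ ℂ)
  have hφ : Continuous φ := φ.toLinearMap.continuous_of_finiteDimensional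
  have := map_exp φ hφ M
  have hc : ⇑(Algebra.ofId ℝ ℂ) = algebraMap ℝ ℂ := funext (Algebra.ofId_apply ℂ)
  simp only [φ, AlgHom.mapMatrix_apply, hc] at this
  exact this

lemma exp_bound (A : Matrix (Fin d) (Fin d) ℝ)
    (hdiag : ∃ P : Matrix (Fin d) (Fin d) ℂ, IsUnit P.det ∧
      ∃ μ : Fin d → ℂ, (∀ i, (μ i).re = 0) ∧
        A.map (algebraMap ℝ ℂ) = P * Matrix.diagonal μ * P⁻¹) :
    ∃ C : ℝ, 0 ≤ C ∧ ∀ t : ℝ, ‖exp (t • A)‖ ≤ C := by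
  obtain ⟨P, hPdet, μ, hμ, hA⟩ := hdiag
  have hPu : IsUnit P := (Matrix.isUnit_iff_isUnit_det P).2 hPdet
  refine ⟨‖P‖ * ‖P⁻¹‖, by positivity, fun t => ?_⟩
  have h1 : (t • A).map (algebraMap ℝ ℂ) = t • A.map (algebraMap ℝ ℂ) := by
    ext i j
    simp [Matrix.map_apply, Complex.real_smul]
  have hsm : t • (P * Matrix.diagonal μ * P⁻¹)
      = P * Matrix.diagonal (t • μ) * P⁻¹ := by
    rw [Matrix.diagonal_smul, mul_smul_comm, smul_mul_assoc]
  have h2 : (exp (t • A)).map (algebraMap ℝ ℂ)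
      = P * Matrix.diagonal (fun i => Complex.exp (t • μ i)) * P⁻¹ := by
    rw [map_exp_ofReal, h1, hA, hsm,
      Matrix.exp_conj P _ hPu, Matrix.exp_diagonal, Pi.exp_def]
    congr 1
    refine congrArg _ (congrArg _ (funext fun i => ?_))
    rw [Pi.smul_apply, ← Complex.exp_eq_exp_ℂ]
  have hdiagnorm : ‖Matrix.diagonal (fun i => Complex.exp (t • μ i))‖ ≤ 1 := by
    rw [Matrix.linfty_opNorm_diagonal]
    refine (pi_norm_le_iff_of_nonneg zero_le_one).2 fun i => ?_
    rw [Complex.norm_exp]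
    have : (t • μ i).re = 0 := by
      rw [Complex.real_smul, Complex.mul_re]
      simp [hμ i]
    rw [this, Real.exp_zero]
  calc ‖exp (t • A)‖
      = ‖(exp (t • A)).map (algebraMap ℝ ℂ)‖ := (norm_map_ofReal _).symm
    _ = ‖P * Matrix.diagonal (fun i => Complex.exp (t • μ i)) * P⁻¹‖ := by rw [h2]
    _ ≤ ‖P * Matrix.diagonal (fun i => Complex.exp (t • μ i))‖ * ‖P⁻¹‖ :=
        Matrix.linfty_opNorm_mul _ _
    _ ≤ (‖P‖ * ‖Matrix.diagonal (fun i => Complex.exp (t • μ i))‖) * ‖P⁻¹‖ := by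
        gcongr
        exact Matrix.linfty_opNorm_mul _ _
    _ ≤ (‖P‖ * 1) * ‖P⁻¹‖ := by gcongr
    _ = ‖P‖ * ‖P⁻¹‖ := by ring

lemma recurrence (A : Matrix (Fin d) (Fin d) ℝ) {C : ℝ}
    (hC : ∀ t : ℝ, ‖exp (t • A)‖ ≤ C) :
    ∀ ε > (0:ℝ), ∀ T : ℝ, ∃ s : ℝ, T ≤ s ∧ ‖exp (s • A) - 1‖ < ε := by
  have hC0 : 0 ≤ C := le_trans (norm_nonneg _) (hC 0)
  set g : ℕ → Matrix (Fin d) (Fin d) ℝ := fun n => exp ((n : ℝ) • A) with hg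
  have hmem : ∀ n, g n ∈ Metric.closedBall (0 : Matrix (Fin d) (Fin d) ℝ) C := fun n => by
    simpa [Metric.mem_closedBall, dist_zero_right] using hC (n : ℝ)
  obtain ⟨B, -, φ, hφ, hconv⟩ :=
    (isCompact_closedBall (0 : Matrix (Fin d) (Fin d) ℝ) C).tendsto_subseq hmem
  intro ε hε T
  have hδ : 0 < ε / (2 * (C + 1)) := by positivity
  obtain ⟨N, hN⟩ := (Metric.tendsto_atTop.1 hconv) _ hδ
  set l : ℕ := N + φ N + ⌈max T 0⌉₊ + 1 with hl
  have hlN : N ≤ l := by omega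
  have hφl : φ N + ⌈max T 0⌉₊ < φ l := lt_of_lt_of_le (by omega) hφ.le_apply
  have hφle : φ N ≤ φ l := by omega
  set m : ℕ := φ l - φ N with hm
  have hcomm : ∀ a b : ℝ, exp (a • A) * exp (b • A) = exp ((a + b) • A) := fun a b => by
    rw [add_smul, Matrix.exp_add_of_commute]
    exact ((Commute.refl A).smul_left a).smul_right b
  have h1 : (-(φ N : ℝ)) + (φ l : ℝ) = (m : ℝ) := by
    rw [hm]
    push_cast [Nat.cast_sub hφle]
    ring
  have h0 : (-(φ N : ℝ)) + (φ N : ℝ) = (0 : ℝ) := by ring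
  have key : exp ((m : ℝ) • A) - 1 =
      exp ((-(φ N : ℝ)) • A) * (g (φ l) - g (φ N)) := by
    rw [mul_sub, hg]
    simp only
    rw [hcomm, hcomm, h1, h0, zero_smul, exp_zero]
  have hdist : ‖g (φ l) - g (φ N)‖ < 2 * (ε / (2 * (C + 1))) := by
    calc ‖g (φ l) - g (φ N)‖ = dist (g (φ l)) (g (φ N)) := (dist_eq_norm _ _).symm
      _ ≤ dist (g (φ l)) B + dist B (g (φ N)) := dist_triangle _ _ _
      _ < ε / (2 * (C + 1)) + ε / (2 * (C + 1)) := by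
          refine add_lt_add (hN l hlN) ?_
          rw [dist_comm]
          exact hN N le_rfl
      _ = 2 * (ε / (2 * (C + 1))) := by ring
  refine ⟨(m : ℝ), ?_, ?_⟩
  · calc T ≤ max T 0 := le_max_left _ _
      _ ≤ (⌈max T 0⌉₊ : ℝ) := Nat.le_ceil _
      _ ≤ (m : ℝ) := by
          have : ⌈max T 0⌉₊ ≤ m := by omega
          exact_mod_cast this
  · calc ‖exp ((m : ℝ) • A) - 1‖
        = ‖exp ((-(φ N : ℝ)) • A) * (g (φ l) - g (φ N))‖ := by rw [key]
      _ ≤ ‖exp ((-(φ N : ℝ)) • A)‖ * ‖g (φ l) - g (φ N)‖ := norm_mul_le _ _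
      _ ≤ (C + 1) * ‖g (φ l) - g (φ N)‖ := by
          have h := (hC (-(φ N : ℝ))).trans (by linarith : C ≤ C + 1)
          gcongr
      _ < (C + 1) * (2 * (ε / (2 * (C + 1)))) :=
          mul_lt_mul_of_pos_left hdist (by positivity)
      _ = ε := by field_simp

lemma key_lemma (A : Matrix (Fin d) (Fin d) ℝ)
    (hdiag : ∃ P : Matrix (Fin d) (Fin d) ℂ, IsUnit P.det ∧
      ∃ μ : Fin d → ℂ, (∀ i, (μ i).re = 0) ∧
        A.map (algebraMap ℝ ℂ) = P * Matrix.diagonal μ * P⁻¹) :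
    ∀ ε > (0:ℝ), ∀ T : ℝ, ∃ s : ℝ, T ≤ s ∧
      ∀ x : Fin d → ℝ, ‖(exp (s • A)).mulVec x - x‖ ≤ ε * ‖x‖ := by
  obtain ⟨C, hC0, hC⟩ := exp_bound A hdiag
  intro ε hε T
  obtain ⟨s, hs, hsmall⟩ := recurrence A hC ε hε T
  refine ⟨s, hs, fun x => ?_⟩
  have : (exp (s • A)).mulVec x - x = (exp (s • A) - 1).mulVec x := by
    rw [Matrix.sub_mulVec, Matrix.one_mulVec]
  rw [this]
  calc ‖(exp (s • A) - 1).mulVec x‖ ≤ ‖exp (s • A) - 1‖ * ‖x‖ :=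
        Matrix.linfty_opNorm_mulVec _ _
    _ ≤ ε * ‖x‖ := mul_le_mul_of_nonneg_right hsmall.le (norm_nonneg x)

end Stmt12Aux

theorem stmt12 {d : ℕ} (A : Matrix (Fin d) (Fin d) ℝ)
    (hdiag : ∃ P : Matrix (Fin d) (Fin d) ℂ, IsUnit P.det ∧
      ∃ μ : Fin d → ℂ, (∀ i, (μ i).re = 0) ∧
        A.map (algebraMap ℝ ℂ) = P * Matrix.diagonal μ * P⁻¹)
    (V : (Fin d → ℝ) → ℝ) (hV : Continuous V)
    (hmono : ∀ x : Fin d → ℝ, Antitone (fun t : ℝ =>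
      V ((NormedSpace.exp (t • A)).mulVec x))) :
    ∀ t : ℝ, 0 ≤ t → ∀ x : Fin d → ℝ,
      V ((NormedSpace.exp (t • A)).mulVec x) = V x := by
  intro t ht x
  have h0 : (NormedSpace.exp ((0:ℝ) • A)).mulVec x = x := by
    rw [zero_smul, NormedSpace.exp_zero, Matrix.one_mulVec]
  have hupper : V ((NormedSpace.exp (t • A)).mulVec x) ≤ V x := by
    have := hmono x ht
    simpa [h0] using this
  -- lower bound via recurrence
  have hkey := Stmt12Aux.key_lemma A hdiag
  have hex : ∀ n : ℕ, ∃ s : ℝ, t ≤ s ∧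
      ∀ y : Fin d → ℝ, ‖(NormedSpace.exp (s • A)).mulVec y - y‖ ≤ (1 / (n + 1)) * ‖y‖ :=
    fun n => hkey (1 / (n + 1)) (by positivity) t
  choose s hs1 hs2 using hex
  have htend : Tendsto (fun n : ℕ => (NormedSpace.exp (s n • A)).mulVec x) atTop (𝓝 x) := by
    rw [tendsto_iff_dist_tendsto_zero]
    refine squeeze_zero (g := fun n : ℕ => 1 / (n + 1 : ℝ) * ‖x‖) (fun n => dist_nonneg)
      (fun n => by rw [dist_eq_norm]; exact hs2 n x) ?_
    · have : Tendsto (fun n : ℕ => (1 : ℝ) / (n + 1)) atTop (𝓝 0) :=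
        tendsto_one_div_add_atTop_nhds_zero_nat
      simpa using this.mul_const ‖x‖
  have hVtend : Tendsto (fun n : ℕ => V ((NormedSpace.exp (s n • A)).mulVec x)) atTop
      (𝓝 (V x)) := (hV.tendsto x).comp htend
  have hlower : V x ≤ V ((NormedSpace.exp (t • A)).mulVec x) :=
    le_of_tendsto hVtend (Eventually.of_forall fun n => hmono x (hs1 n))
  linarith
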